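/- Let X be a real normed linear space with dim X ≥ 2. If for all x, y ∈ S_X there exist nonzero real numbers α, β such that ‖αx + βy‖² + ‖αx − βy‖² ≥ 2(α² + β²), then the norm of X is induced by an inner product. -/

import Mathlib

open Real

noncomputable def eN (z : ℝ × ℝ) : ℝ := Real.sqrt (z.1^2 + z.2^2)

lemma eN_nonneg (z : ℝ × ℝ) : 0 ≤ eN z := Real.sqrt_nonneg _

lemma eN_sq (z : ℝ × ℝ) : (eN z)^2 = z.1^2 + z.2^2 :=
  Real.sq_sqrt (by positivity)

lemma eN_eq_one {z : ℝ × ℝ} (h : z.1^2 + z.2^2 = 1) : eN z = 1 := by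
  rw [eN, h, Real.sqrt_one]

lemma eN_smul (c : ℝ) (z : ℝ × ℝ) : eN (c • z) = |c| * eN z := by
  rw [eN, eN]
  simp only [Prod.smul_fst, Prod.smul_snd, smul_eq_mul]
  rw [show (c*z.1)^2 + (c*z.2)^2 = c^2 * (z.1^2+z.2^2) by ring,
    Real.sqrt_mul (by positivity), Real.sqrt_sq_eq_abs]

lemma abs_fst_le (z : ℝ × ℝ) : |z.1| ≤ eN z := by
  rw [eN, ← Real.sqrt_sq_eq_abs]
  exact Real.sqrt_le_sqrt (by nlinarith [sq_nonneg z.2])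

lemma abs_snd_le (z : ℝ × ℝ) : |z.2| ≤ eN z := by
  rw [eN, ← Real.sqrt_sq_eq_abs]
  exact Real.sqrt_le_sqrt (by nlinarith [sq_nonneg z.1])

lemma eN_pos {z : ℝ × ℝ} (h : z ≠ 0) : 0 < eN z := by
  rw [eN]
  apply Real.sqrt_pos.2
  have : z.1 ≠ 0 ∨ z.2 ≠ 0 := by
    by_contra hc
    push_neg at hc
    exact h (Prod.ext hc.1 hc.2)
  rcases this with h1 | h2
  · nlinarith [sq_nonneg z.2, pow_pos (abs_pos.2 h1) 2, sq_abs z.1]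
  · nlinarith [sq_nonneg z.1, pow_pos (abs_pos.2 h2) 2, sq_abs z.2]

lemma eN_cont : Continuous eN := by
  apply Real.continuous_sqrt.comp
  fun_prop

lemma eN_zero : eN 0 = 0 := by simp [eN]

lemma le_of_sq_le_sq' {x y : ℝ} (hx : 0 ≤ x) (hy : 0 ≤ y) (h : x^2 ≤ y^2) : x ≤ y := by
  nlinarith

lemma eN_le_of_sq {z : ℝ × ℝ} {c : ℝ} (hc : 0 ≤ c) (h : z.1^2 + z.2^2 ≤ c^2) :
    eN z ≤ c := by
  rw [eN, show c = Real.sqrt (c^2) by rw [Real.sqrt_sq hc]]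
  exact Real.sqrt_le_sqrt h


theorem perturb_bound (N₂ : ℝ × ℝ → ℝ)
    (hle : ∀ z, N₂ z ≤ eN z)
    (hsmul : ∀ (c : ℝ) z, N₂ (c • z) = |c| * N₂ z)
    (f : ℝ × ℝ) (hf : f.1^2 + f.2^2 = 1)
    (a b u δ : ℝ) (hδpos : 0 < δ) (hδle : δ ≤ 1) (huu : u = δ/3)
    (hapos : 0 < a) (hbpos : 0 < b)
    (ha2 : a^2 = 1 - u) (hb2 : b^2 = 1 + 2*u)
    (hsec : ∀ d : ℝ × ℝ, d.1^2 + d.2^2 = 1 → 1/3 ≤ (d.2*f.1 - d.1*f.2)^2 → N₂ d ≤ 1 - δ)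
    (z : ℝ × ℝ) :
    N₂ ((a * (z.1*f.1 + z.2*f.2)) • f
        + (b * (z.2*f.1 - z.1*f.2)) • ((-f.2, f.1) : ℝ × ℝ)) ≤ eN z := by
  have hupos : 0 < u := by rw [huu]; linarith
  have hule : u ≤ 1/3 := by rw [huu]; linarith
  have hble : 1 ≤ b := by nlinarith
  have hale : a ≤ 1 := by nlinarith
  have hbδ : b * (1 - δ) ≤ 1 := by nlinarith [mul_pos hbpos hδpos, sq_nonneg (b*(1-δ))]
  obtain ⟨c, hc⟩ : ∃ c : ℝ, z.1*f.1 + z.2*f.2 = c := ⟨_, rfl⟩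
  obtain ⟨s, hs⟩ : ∃ s : ℝ, z.2*f.1 - z.1*f.2 = s := ⟨_, rfl⟩
  rw [hc, hs]
  obtain ⟨w, hw⟩ : ∃ w : ℝ × ℝ, (a * c) • f + (b * s) • ((-f.2, f.1) : ℝ × ℝ) = w := ⟨_, rfl⟩
  rw [hw]
  have hw1 : w.1 = a*c*f.1 - b*s*f.2 := by rw [← hw]; simp; try ring
  have hw2 : w.2 = a*c*f.2 + b*s*f.1 := by rw [← hw]; simp; try ring
  have hwsq : w.1^2 + w.2^2 = a^2*c^2 + b^2*s^2 := by
    rw [hw1, hw2]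
    linear_combination (a^2*c^2 + b^2*s^2) * hf
  have hcs : c^2 + s^2 = z.1^2 + z.2^2 := by
    rw [← hc, ← hs]
    linear_combination (z.1^2 + z.2^2) * hf
  have hkey : a^2*c^2 + b^2*s^2 = (1-u)*(c^2+s^2) + 3*u*s^2 := by
    linear_combination c^2 * ha2 + s^2 * hb2
  rcases le_or_gt (3*s^2) (z.1^2 + z.2^2) with hc1 | hc2
  · -- close to ±f direction: euclidean bound suffices
    have h0 : 0 ≤ u * ((z.1^2+z.2^2) - 3*s^2) := mul_nonneg hupos.le (by linarith)
    have : w.1^2 + w.2^2 ≤ (eN z)^2 := by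
      rw [hwsq, eN_sq, hkey, hcs]
      nlinarith [h0]
    exact le_trans (hle w) (eN_le_of_sq (eN_nonneg z) this)
  · -- sector case
    have hs2pos : 0 < s^2 := by nlinarith [hcs, sq_nonneg c]
    obtain ⟨r, hr⟩ : ∃ r : ℝ, eN w = r := ⟨_, rfl⟩
    have hr2 : r^2 = a^2*c^2 + b^2*s^2 := by rw [← hr, eN_sq, hwsq]
    have hr2pos : 0 < r^2 := by
      have e1 : 0 < b^2*s^2 := mul_pos (pow_pos hbpos 2) hs2pos
      have e2 : 0 ≤ a^2*c^2 := mul_nonneg (sq_nonneg a) (sq_nonneg c)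
      rw [hr2]; linarith
    have hrpos : 0 < r := by
      rcases (hr ▸ eN_nonneg w).lt_or_eq with h | h
      · exact h
      · exfalso; rw [← h] at hr2pos; simp at hr2pos
    have hrne : r ≠ 0 := ne_of_gt hrpos
    obtain ⟨d', hd'⟩ : ∃ d' : ℝ × ℝ, r⁻¹ • w = d' := ⟨_, rfl⟩
    have hd'1 : d'.1 = r⁻¹ * w.1 := by rw [← hd']; simp
    have hd'2 : d'.2 = r⁻¹ * w.2 := by rw [← hd']; simp
    have hwr : w.1^2 + w.2^2 = r^2 := by rw [hr2, hwsq]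
    have hd'unit : d'.1^2 + d'.2^2 = 1 := by
      rw [hd'1, hd'2]
      field_simp
      linarith [hwr]
    have hwdet : w.2*f.1 - w.1*f.2 = b*s := by
      rw [hw1, hw2]
      linear_combination (b*s) * hf
    have hd'le : N₂ d' ≤ 1 - δ := by
      apply hsec d' hd'unit
      have hq : d'.2*f.1 - d'.1*f.2 = r⁻¹ * (b*s) := by
        rw [hd'1, hd'2,
          show r⁻¹*w.2*f.1 - r⁻¹*w.1*f.2 = r⁻¹*(w.2*f.1 - w.1*f.2) by ring, hwdet]
      rw [hq]
      have hc2' : c^2 < 2*s^2 := by linarith [hcs, hc2]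
      have ea : a^2 ≤ 1 := by linarith [ha2, hupos]
      have eb : 1 ≤ b^2 := by linarith [hb2, hupos]
      have e1 : a^2*c^2 ≤ c^2 := by
        have := mul_le_mul_of_nonneg_right ea (sq_nonneg c)
        linarith [this]
      have e2 : s^2 ≤ b^2*s^2 := by
        have := mul_le_mul_of_nonneg_right eb (sq_nonneg s)
        linarith [this]
      have h3 : (1/3) * r^2 ≤ (b*s)^2 := by
        rw [hr2, mul_pow]
        linarith
      have heq : (r⁻¹*(b*s))^2 = (b*s)^2 / r^2 := by field_simp
      rw [heq, le_div_iff₀ hr2pos]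
      linarith
    have hwd' : w = r • d' := by rw [← hd']; exact (smul_inv_smul₀ hrne w).symm
    have hNw : N₂ w = r * N₂ d' := by
      rw [hwd', hsmul, abs_of_pos hrpos]
    have hrb : r ≤ b * eN z := by
      have ea : a^2 ≤ 1 := by linarith [ha2, hupos]
      have eb : 1 ≤ b^2 := by linarith [hb2, hupos]
      have e1 : a^2*c^2 ≤ b^2*c^2 := by
        have := mul_le_mul_of_nonneg_right (ea.trans eb) (sq_nonneg c)
        linarith [this]
      have h1 : r^2 ≤ (b * eN z)^2 := by
        rw [mul_pow, eN_sq, hr2, ← hcs]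
        have : b^2*(c^2+s^2) = b^2*c^2 + b^2*s^2 := by ring
        linarith [this, e1]
      exact le_of_sq_le_sq' hrpos.le (mul_nonneg hbpos.le (eN_nonneg z)) h1
    calc N₂ w = r * N₂ d' := hNw
      _ ≤ r * (1 - δ) := mul_le_mul_of_nonneg_left hd'le hrpos.le
      _ ≤ (b * eN z) * (1 - δ) := mul_le_mul_of_nonneg_right hrb (by linarith)
      _ = (b * (1-δ)) * eN z := by ring
      _ ≤ 1 * eN z := mul_le_mul_of_nonneg_right hbδ (eN_nonneg z)
      _ = eN z := one_mul _

theorem perturb (N₂ : ℝ × ℝ → ℝ)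
    (hle : ∀ z, N₂ z ≤ eN z)
    (hsmul : ∀ (c : ℝ) z, N₂ (c • z) = |c| * N₂ z)
    (hnonneg : ∀ z, 0 ≤ N₂ z)
    (hcont : Continuous N₂)
    (f : ℝ × ℝ) (hf : f.1^2 + f.2^2 = 1)
    (hcontact : ∀ d : ℝ × ℝ, d.1^2 + d.2^2 = 1 → N₂ d = 1 → d = f ∨ d = -f) :
    ∃ a b : ℝ, 0 < a ∧ 0 < b ∧ 1 < a * b ∧
      ∀ z : ℝ × ℝ, N₂ ((a * (z.1*f.1 + z.2*f.2)) • f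
        + (b * (z.2*f.1 - z.1*f.2)) • ((-f.2, f.1) : ℝ × ℝ)) ≤ eN z := by
  set Sg : Set (ℝ × ℝ) := {d | d.1^2 + d.2^2 = 1 ∧ 1/3 ≤ (d.2*f.1 - d.1*f.2)^2} with hSg
  have hSgsub : Sg ⊆ Metric.closedBall 0 1 := by
    intro d hd
    rw [Metric.mem_closedBall, dist_zero_right, Prod.norm_def]
    have h1 : d.1^2 ≤ 1 := by nlinarith [sq_nonneg d.2, hd.1]
    have h2 : d.2^2 ≤ 1 := by nlinarith [sq_nonneg d.1, hd.1]
    have h1' : ‖d.1‖ ≤ 1 := by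
      rw [Real.norm_eq_abs]; nlinarith [abs_nonneg d.1, sq_abs d.1]
    have h2' : ‖d.2‖ ≤ 1 := by
      rw [Real.norm_eq_abs]; nlinarith [abs_nonneg d.2, sq_abs d.2]
    exact max_le h1' h2'
  have hSgclosed : IsClosed Sg := by
    apply IsClosed.inter
    · exact isClosed_eq ((continuous_fst.pow 2).add (continuous_snd.pow 2)) continuous_const
    · exact isClosed_le continuous_const
        (((continuous_snd.mul continuous_const).sub (continuous_fst.mul continuous_const)).pow 2)
  have hSgcpt : IsCompact Sg :=
    (isCompact_closedBall (0 : ℝ × ℝ) 1).of_isClosed_subset hSgclosed hSgsub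
  have hSgne : Sg.Nonempty := by
    refine ⟨(-f.2, f.1), ?_, ?_⟩
    · show (-f.2)^2 + f.1^2 = 1
      linarith [hf]
    · show 1/3 ≤ (f.1*f.1 - (-f.2)*f.2)^2
      nlinarith [hf]
  obtain ⟨dm, hdmSg, hdmax⟩ := hSgcpt.exists_isMaxOn hSgne hcont.continuousOn
  have hdmax' : ∀ d ∈ Sg, N₂ d ≤ N₂ dm := fun d hd => hdmax hd
  have hm₁nonneg : 0 ≤ N₂ dm := hnonneg dm
  have hm₁lt : N₂ dm < 1 := by
    have hle1 : N₂ dm ≤ 1 := by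
      have := hle dm
      rwa [eN_eq_one hdmSg.1] at this
    rcases lt_or_eq_of_le hle1 with h | h
    · exact h
    · exfalso
      rcases hcontact dm hdmSg.1 h with hd | hd
      · have h2 := hdmSg.2
        rw [hd] at h2
        nlinarith [h2]
      · have h2 := hdmSg.2
        rw [hd] at h2
        simp only [Prod.fst_neg, Prod.snd_neg] at h2
        nlinarith [h2]
  set δ : ℝ := 1 - N₂ dm with hδdef
  have hδpos : 0 < δ := by rw [hδdef]; linarith
  have hδle : δ ≤ 1 := by rw [hδdef]; linarith
  have hsec : ∀ d : ℝ × ℝ, d.1^2 + d.2^2 = 1 → 1/3 ≤ (d.2*f.1 - d.1*f.2)^2 → N₂ d ≤ 1 - δ := by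
    intro d h1 h2
    have := hdmax' d ⟨h1, h2⟩
    rw [hδdef]; linarith
  have hupos : 0 < δ/3 := by linarith
  have hule : δ/3 ≤ 1/3 := by linarith
  obtain ⟨a, hapos, ha2⟩ : ∃ a : ℝ, 0 < a ∧ a^2 = 1 - δ/3 :=
    ⟨Real.sqrt (1 - δ/3), Real.sqrt_pos.2 (by linarith), Real.sq_sqrt (by linarith)⟩
  obtain ⟨b, hbpos, hb2⟩ : ∃ b : ℝ, 0 < b ∧ b^2 = 1 + 2*(δ/3) :=
    ⟨Real.sqrt (1 + 2*(δ/3)), Real.sqrt_pos.2 (by linarith), Real.sq_sqrt (by linarith)⟩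
  have hab : 1 < a * b := by
    have habsq : (a*b)^2 = (1 - δ/3) * (1 + 2*(δ/3)) := by
      rw [mul_pow, ha2, hb2]
    nlinarith [mul_pos hapos hbpos]
  exact ⟨a, b, hapos, hbpos, hab,
    fun z => perturb_bound N₂ hle hsmul f hf a b (δ/3) δ hδpos hδle rfl hapos hbpos ha2 hb2 hsec z⟩

lemma eq_of_sq_eq' {x y : ℝ} (hx : 0 ≤ x) (hy : 0 ≤ y) (h : x^2 = y^2) : x = y := by
  nlinarith

lemma pos_of_sq_pos' {x : ℝ} (hx : 0 ≤ x) (h : 0 < x^2) : 0 < x := by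
  nlinarith

lemma rho_pos_aux {a b q r : ℝ} (ha : 0 < a) (hb : 0 < b) (hq : -1 < q)
    (h : r^2 = a^2 + b^2 + 2*a*b*q) (hr : 0 ≤ r) : 0 < r := by
  apply pos_of_sq_pos' hr
  nlinarith [mul_pos ha hb, sq_nonneg (a - b)]

lemma abs_lt_one_of_sq_lt_one {x : ℝ} (h : x^2 < 1) : -1 < x ∧ x < 1 := by
  constructor <;> nlinarith

lemma exists_angle {z : ℝ × ℝ} (h : z.1^2 + z.2^2 = 1) :
    ∃ t : ℝ, Real.cos t = z.1 ∧ Real.sin t = z.2 := by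
  have h1 : -1 ≤ z.1 := by nlinarith [sq_nonneg z.2]
  have h2 : z.1 ≤ 1 := by nlinarith [sq_nonneg z.2]
  rcases le_or_gt 0 z.2 with hz2 | hz2
  · refine ⟨Real.arccos z.1, Real.cos_arccos h1 h2, ?_⟩
    rw [Real.sin_arccos, show 1 - z.1^2 = z.2^2 by linarith]
    exact Real.sqrt_sq hz2
  · refine ⟨-Real.arccos z.1, ?_, ?_⟩
    · rw [Real.cos_neg]; exact Real.cos_arccos h1 h2
    · rw [Real.sin_neg, Real.sin_arccos, show 1 - z.1^2 = z.2^2 by linarith,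
        Real.sqrt_sq_eq_abs, abs_of_neg hz2]
      ring

theorem between (N₂ : ℝ × ℝ → ℝ)
    (hle : ∀ z, N₂ z ≤ eN z)
    (hsmul : ∀ (c : ℝ) z, N₂ (c • z) = |c| * N₂ z)
    (hnonneg : ∀ z, 0 ≤ N₂ z)
    (hH : ∀ z w : ℝ × ℝ, N₂ z = 1 → N₂ w = 1 → ∃ α β : ℝ, α ≠ 0 ∧ β ≠ 0 ∧
      2 * (α^2 + β^2) ≤ N₂ (α • z + β • w)^2 + N₂ (α • z - β • w)^2)
    (s t : ℝ) (hs : N₂ (Real.cos s, Real.sin s) = 1)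
    (ht : N₂ (Real.cos t, Real.sin t) = 1)
    (h0 : 0 < t - s) (hπ : t - s < π) :
    ∃ r : ℝ, s < r ∧ r < t ∧ N₂ (Real.cos r, Real.sin r) = 1 := by
  have hneg : ∀ v : ℝ × ℝ, N₂ (-v) = N₂ v := by
    intro v
    rw [show -v = (-1 : ℝ) • v by simp, hsmul]
    simp
  have hzs : (Real.cos s)^2 + (Real.sin s)^2 = 1 := Real.cos_sq_add_sin_sq s
  have hzt : (Real.cos t)^2 + (Real.sin t)^2 = 1 := Real.cos_sq_add_sin_sq t
  obtain ⟨α, β, hα, hβ, hineq⟩ :=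
    hH (Real.cos s, Real.sin s) (Real.cos t, Real.sin t) hs ht
  -- replace α β by positive values
  obtain ⟨α', β', hα'pos, hβ'pos, hα'sq, hβ'sq, hsum⟩ :
      ∃ α' β' : ℝ, 0 < α' ∧ 0 < β' ∧ α'^2 = α^2 ∧ β'^2 = β^2 ∧
        N₂ (α' • (Real.cos s, Real.sin s) + β' • (Real.cos t, Real.sin t))^2
          + N₂ (α' • (Real.cos s, Real.sin s) - β' • (Real.cos t, Real.sin t))^2
        = N₂ (α • (Real.cos s, Real.sin s) + β • (Real.cos t, Real.sin t))^2
          + N₂ (α • (Real.cos s, Real.sin s) - β • (Real.cos t, Real.sin t))^2 := by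
    set Z := (Real.cos s, Real.sin s)
    set W := (Real.cos t, Real.sin t)
    rcases hα.lt_or_gt with hαn | hαp <;> rcases hβ.lt_or_gt with hβn | hβp
    · refine ⟨-α, -β, by linarith, by linarith, by ring, by ring, ?_⟩
      rw [show (-α) • Z + (-β) • W = -(α • Z + β • W) by module,
        show (-α) • Z - (-β) • W = -(α • Z - β • W) by module, hneg, hneg]
    · refine ⟨-α, β, by linarith, hβp, by ring, rfl, ?_⟩
      rw [show (-α) • Z + β • W = -(α • Z - β • W) by module,
        show (-α) • Z - β • W = -(α • Z + β • W) by module, hneg, hneg]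
      ring
    · refine ⟨α, -β, hαp, by linarith, rfl, by ring, ?_⟩
      rw [show α • Z + (-β) • W = α • Z - β • W by module,
        show α • Z - (-β) • W = α • Z + β • W by module]
      ring
    · exact ⟨α, β, hαp, hβp, rfl, rfl, rfl⟩
  obtain ⟨u₁, hu₁⟩ : ∃ u : ℝ × ℝ,
      α' • ((Real.cos s, Real.sin s) : ℝ × ℝ) + β' • (Real.cos t, Real.sin t) = u := ⟨_, rfl⟩
  obtain ⟨u₂, hu₂⟩ : ∃ u : ℝ × ℝ,
      α' • ((Real.cos s, Real.sin s) : ℝ × ℝ) - β' • (Real.cos t, Real.sin t) = u := ⟨_, rfl⟩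
  have hu₁1 : u₁.1 = α' * Real.cos s + β' * Real.cos t := by rw [← hu₁]; simp
  have hu₁2 : u₁.2 = α' * Real.sin s + β' * Real.sin t := by rw [← hu₁]; simp
  have hu₂1 : u₂.1 = α' * Real.cos s - β' * Real.cos t := by rw [← hu₂]; simp
  have hu₂2 : u₂.2 = α' * Real.sin s - β' * Real.sin t := by rw [← hu₂]; simp
  have hineq' : 2 * (α'^2 + β'^2) ≤ N₂ u₁^2 + N₂ u₂^2 := by
    rw [← hu₁, ← hu₂, hsum, hα'sq, hβ'sq]
    exact hineq
  have heu : (eN u₁)^2 + (eN u₂)^2 = 2 * (α'^2 + β'^2) := by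
    rw [eN_sq, eN_sq, hu₁1, hu₁2, hu₂1, hu₂2]
    linear_combination (2*α'^2) * hzs + (2*β'^2) * hzt
  have hb1 : N₂ u₁ ≤ eN u₁ := hle u₁
  have hb2 : N₂ u₂ ≤ eN u₂ := hle u₂
  have hsq1 : N₂ u₁^2 ≤ (eN u₁)^2 := pow_le_pow_left₀ (hnonneg u₁) hb1 2
  have hsq2 : N₂ u₂^2 ≤ (eN u₂)^2 := pow_le_pow_left₀ (hnonneg u₂) hb2 2
  have he1 : N₂ u₁ = eN u₁ :=
    eq_of_sq_eq' (hnonneg u₁) (eN_nonneg u₁) (by linarith)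
  -- the contact point u₁ has positive coefficients
  obtain ⟨ρ, hρ⟩ : ∃ ρ : ℝ, eN u₁ = ρ := ⟨_, rfl⟩
  have hρsq : u₁.1^2 + u₁.2^2 = ρ^2 := by rw [← hρ, eN_sq]
  have hq : Real.cos (t - s) = Real.cos t * Real.cos s + Real.sin t * Real.sin s :=
    Real.cos_sub t s
  have hqgt : -1 < Real.cos (t - s) := by
    have := Real.cos_lt_cos_of_nonneg_of_le_pi (le_of_lt h0) (le_refl π) hπ
    rw [Real.cos_pi] at this
    linarith
  have hρ2 : ρ^2 = α'^2 + β'^2 + 2*α'*β'*Real.cos (t - s) := by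
    rw [← hρsq, hu₁1, hu₁2, hq]
    linear_combination (α'^2) * hzs + (β'^2) * hzt
  have hρpos : 0 < ρ :=
    rho_pos_aux hα'pos hβ'pos hqgt hρ2 (hρ ▸ eN_nonneg u₁)
  have hρne : ρ ≠ 0 := ne_of_gt hρpos
  obtain ⟨C, hC⟩ : ∃ C : ℝ, Real.cos s * u₁.1 + Real.sin s * u₁.2 = C := ⟨_, rfl⟩
  obtain ⟨Sv, hSv⟩ : ∃ Sv : ℝ, Real.cos s * u₁.2 - Real.sin s * u₁.1 = Sv := ⟨_, rfl⟩
  have hSveq : Sv = β' * Real.sin (t - s) := by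
    rw [← hSv, hu₁1, hu₁2, Real.sin_sub]
    ring
  have hSvpos : 0 < Sv := by
    rw [hSveq]
    exact mul_pos hβ'pos (Real.sin_pos_of_pos_of_lt_pi h0 hπ)
  have hCS : C^2 + Sv^2 = ρ^2 := by
    rw [← hC, ← hSv]
    linear_combination (u₁.1^2 + u₁.2^2) * hzs + hρsq
  have hClt : C^2 < ρ^2 := by linarith [pow_pos hSvpos 2, hCS]
  have hCd1 : -1 < C/ρ ∧ C/ρ < 1 := by
    apply abs_lt_one_of_sq_lt_one
    rw [div_pow, div_lt_one (pow_pos hρpos 2)]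
    exact hClt
  have hcosθ : Real.cos (Real.arccos (C/ρ)) = C/ρ :=
    Real.cos_arccos (le_of_lt hCd1.1) (le_of_lt hCd1.2)
  have hsinθ : Real.sin (Real.arccos (C/ρ)) = Sv/ρ := by
    rw [Real.sin_arccos, show 1 - (C/ρ)^2 = (Sv/ρ)^2 by
      field_simp
      linarith [hCS]]
    exact Real.sqrt_sq (by positivity)
  obtain ⟨θ, hθdef⟩ : ∃ θ : ℝ, Real.arccos (C/ρ) = θ := ⟨_, rfl⟩
  rw [hθdef] at hcosθ hsinθ
  have hθpos : 0 < θ := by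
    rw [← hθdef]
    apply Real.arccos_pos.2 hCd1.2
  have hθle : θ ≤ π := by rw [← hθdef]; exact Real.arccos_le_pi _
  refine ⟨s + θ, by linarith, ?_, ?_⟩
  · -- s + θ < t
    have hcosr : Real.cos (s + θ) = u₁.1/ρ := by
      rw [Real.cos_add, hcosθ, hsinθ]
      field_simp
      rw [← hC, ← hSv]
      linear_combination u₁.1 * hzs
    have hsinr : Real.sin (s + θ) = u₁.2/ρ := by
      rw [Real.sin_add, hcosθ, hsinθ]
      field_simp
      rw [← hC, ← hSv]
      linear_combination u₁.2 * hzs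
    have hsintr : Real.sin (t - (s + θ)) = α' * Real.sin (t - s) / ρ := by
      rw [Real.sin_sub t (s + θ), hcosr, hsinr, hu₁1, hu₁2, Real.sin_sub t s]
      field_simp
      ring
    have hpos2 : 0 < Real.sin (t - (s + θ)) := by
      rw [hsintr]
      exact div_pos (mul_pos hα'pos (Real.sin_pos_of_pos_of_lt_pi h0 hπ)) hρpos
    by_contra hcon
    push_neg at hcon
    have h1 : 0 ≤ s + θ - t := by linarith
    have h2 : s + θ - t ≤ π := by linarith
    have : 0 ≤ Real.sin (s + θ - t) := Real.sin_nonneg_of_nonneg_of_le_pi h1 h2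
    rw [show s + θ - t = -(t - (s + θ)) by ring, Real.sin_neg] at this
    linarith
  · -- contact at s + θ
    have hcosr : Real.cos (s + θ) = u₁.1/ρ := by
      rw [Real.cos_add, hcosθ, hsinθ]
      field_simp
      rw [← hC, ← hSv]
      linear_combination u₁.1 * hzs
    have hsinr : Real.sin (s + θ) = u₁.2/ρ := by
      rw [Real.sin_add, hcosθ, hsinθ]
      field_simp
      rw [← hC, ← hSv]
      linear_combination u₁.2 * hzs
    have hd : ((Real.cos (s + θ), Real.sin (s + θ)) : ℝ × ℝ) = ρ⁻¹ • u₁ := by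
      apply Prod.ext
      · simp [hcosr, div_eq_inv_mul]
      · simp [hsinr, div_eq_inv_mul]
    rw [hd, hsmul, abs_of_pos (inv_pos.2 hρpos), he1, hρ]
    field_simp

theorem contact_dense (N₂ : ℝ × ℝ → ℝ)
    (hle : ∀ z, N₂ z ≤ eN z)
    (hsmul : ∀ (c : ℝ) z, N₂ (c • z) = |c| * N₂ z)
    (hnonneg : ∀ z, 0 ≤ N₂ z)
    (hcont : Continuous N₂)
    (hH : ∀ z w : ℝ × ℝ, N₂ z = 1 → N₂ w = 1 → ∃ α β : ℝ, α ≠ 0 ∧ β ≠ 0 ∧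
      2 * (α^2 + β^2) ≤ N₂ (α • z + β • w)^2 + N₂ (α • z - β • w)^2)
    (z w : ℝ × ℝ) (hz : eN z = 1) (hzc : N₂ z = 1) (hw : eN w = 1) (hwc : N₂ w = 1)
    (hind : z.1 * w.2 - z.2 * w.1 ≠ 0) :
    ∀ v : ℝ × ℝ, N₂ v = eN v := by
  have hneg : ∀ v : ℝ × ℝ, N₂ (-v) = N₂ v := by
    intro v
    rw [show -v = (-1 : ℝ) • v by simp, hsmul]
    simp
  have hz1 : z.1^2 + z.2^2 = 1 := by
    have := eN_sq z
    rw [hz] at this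
    linarith [this]
  have hw1 : w.1^2 + w.2^2 = 1 := by
    have := eN_sq w
    rw [hw] at this
    linarith [this]
  obtain ⟨s₁, hs₁c, hs₁s⟩ := exists_angle hz1
  obtain ⟨t₁, ht₁c, ht₁s⟩ := exists_angle hw1
  have hzeq : z = (Real.cos s₁, Real.sin s₁) := by
    apply Prod.ext <;> simp [hs₁c, hs₁s]
  have hweq : w = (Real.cos t₁, Real.sin t₁) := by
    apply Prod.ext <;> simp [ht₁c, ht₁s]
  have hsin : Real.sin (t₁ - s₁) ≠ 0 := by
    rw [Real.sin_sub]
    intro hcon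
    apply hind
    rw [hzeq, hweq]
    simp only
    linarith [hcon]
  have hPs₁ : N₂ (Real.cos s₁, Real.sin s₁) = 1 := by rw [← hzeq]; exact hzc
  have hPt₁ : N₂ (Real.cos t₁, Real.sin t₁) = 1 := by rw [← hweq]; exact hwc
  have hper : ∀ r : ℝ, N₂ (Real.cos r, Real.sin r) = 1 →
      N₂ (Real.cos (r + π), Real.sin (r + π)) = 1 := by
    intro r hr
    have : ((Real.cos (r + π), Real.sin (r + π)) : ℝ × ℝ)
        = -(Real.cos r, Real.sin r) := by
      apply Prod.ext <;> simp [Real.cos_add, Real.sin_add]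
    rw [this, hneg]
    exact hr
  have hper' : ∀ r : ℝ, N₂ (Real.cos r, Real.sin r) = 1 →
      N₂ (Real.cos (r - π), Real.sin (r - π)) = 1 := by
    intro r hr
    have : ((Real.cos (r - π), Real.sin (r - π)) : ℝ × ℝ)
        = -(Real.cos r, Real.sin r) := by
      apply Prod.ext <;> simp [Real.cos_sub, Real.sin_sub]
    rw [this, hneg]
    exact hr
  have hperk : ∀ (k : ℤ) (r : ℝ), N₂ (Real.cos r, Real.sin r) = 1 →
      N₂ (Real.cos (r + k * π), Real.sin (r + k * π)) = 1 := by
    intro k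
    induction k using Int.induction_on with
    | zero => intro r hr; simpa using hr
    | succ n ih =>
      intro r hr
      have h2 := hper _ (ih r hr)
      have he : r + ((n : ℤ) : ℝ) * π + π = r + (((n : ℤ) + 1 : ℤ) : ℝ) * π := by
        push_cast; ring
      rwa [he] at h2
    | pred n ih =>
      intro r hr
      have h2 := hper' _ (ih r hr)
      have he : r + ((-(n:ℤ) : ℤ) : ℝ) * π - π = r + ((-(n:ℤ) - 1 : ℤ) : ℝ) * π := by
        push_cast; ring
      rwa [he] at h2
  -- every angle is a contact angle
  have hall : ∀ c : ℝ, N₂ (Real.cos c, Real.sin c) = 1 := by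
    intro c
    by_contra hcon
    obtain ⟨s₀, hs₀P, hs₀le, hs₀lt, k₀, hk₀⟩ :
        ∃ s₀ : ℝ, N₂ (Real.cos s₀, Real.sin s₀) = 1 ∧ s₀ ≤ c ∧ c < s₀ + π ∧
          ∃ k : ℤ, s₀ = s₁ + k * π := by
      refine ⟨s₁ + ⌊(c - s₁)/π⌋ * π, hperk _ _ hPs₁, ?_, ?_, ⌊(c - s₁)/π⌋, rfl⟩
      · have := Int.floor_le ((c - s₁)/π)
        rw [le_div_iff₀ Real.pi_pos] at this
        linarith
      · have := Int.lt_floor_add_one ((c - s₁)/π)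
        rw [div_lt_iff₀ Real.pi_pos] at this
        push_cast at this ⊢
        linarith
    have hs₀ne : s₀ ≠ c := by
      intro hh; rw [hh] at hs₀P; exact hcon hs₀P
    have hs₀c : s₀ < c := lt_of_le_of_ne hs₀le hs₀ne
    -- sup of contact angles below c
    obtain ⟨a, haP, has₀, hac, hasup⟩ :
        ∃ a, N₂ (Real.cos a, Real.sin a) = 1 ∧ s₀ ≤ a ∧ a ≤ c ∧
          (∀ r, N₂ (Real.cos r, Real.sin r) = 1 → s₀ ≤ r → r ≤ c → r ≤ a) := by
      have hclosed : IsClosed {r : ℝ | N₂ (Real.cos r, Real.sin r) = 1 ∧ r ∈ Set.Icc s₀ c} :=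
        (isClosed_eq (hcont.comp (Real.continuous_cos.prodMk Real.continuous_sin))
          continuous_const).inter isClosed_Icc
      have hne : Set.Nonempty {r : ℝ | N₂ (Real.cos r, Real.sin r) = 1 ∧ r ∈ Set.Icc s₀ c} :=
        ⟨s₀, hs₀P, le_refl _, hs₀c.le⟩
      have hbdd : BddAbove {r : ℝ | N₂ (Real.cos r, Real.sin r) = 1 ∧ r ∈ Set.Icc s₀ c} :=
        ⟨c, fun r hr => hr.2.2⟩
      have hmem := hclosed.csSup_mem hne hbdd
      exact ⟨sSup _, hmem.1, hmem.2.1, hmem.2.2,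
        fun r h1 h2 h3 => le_csSup hbdd ⟨h1, h2, h3⟩⟩
    -- inf of contact angles above c
    obtain ⟨b, hbP, hbc, hbs₀, hbinf⟩ :
        ∃ b, N₂ (Real.cos b, Real.sin b) = 1 ∧ c ≤ b ∧ b ≤ s₀ + π ∧
          (∀ r, N₂ (Real.cos r, Real.sin r) = 1 → c ≤ r → r ≤ s₀ + π → b ≤ r) := by
      have hclosed : IsClosed {r : ℝ | N₂ (Real.cos r, Real.sin r) = 1 ∧ r ∈ Set.Icc c (s₀+π)} :=
        (isClosed_eq (hcont.comp (Real.continuous_cos.prodMk Real.continuous_sin))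
          continuous_const).inter isClosed_Icc
      have hne : Set.Nonempty {r : ℝ | N₂ (Real.cos r, Real.sin r) = 1 ∧ r ∈ Set.Icc c (s₀+π)} :=
        ⟨s₀ + π, hper _ hs₀P, hs₀lt.le, le_refl _⟩
      have hbdd : BddBelow {r : ℝ | N₂ (Real.cos r, Real.sin r) = 1 ∧ r ∈ Set.Icc c (s₀+π)} :=
        ⟨c, fun r hr => hr.2.1⟩
      have hmem := hclosed.csInf_mem hne hbdd
      exact ⟨sInf _, hmem.1, hmem.2.1, hmem.2.2,
        fun r h1 h2 h3 => csInf_le hbdd ⟨h1, h2, h3⟩⟩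
    have hane : a ≠ c := fun hh => hcon (hh ▸ haP)
    have hbne : b ≠ c := fun hh => hcon (hh ▸ hbP)
    have haltc : a < c := lt_of_le_of_ne hac hane
    have hcltb : c < b := lt_of_le_of_ne hbc (Ne.symm hbne)
    have hbale : b - a ≤ π := by linarith
    rcases lt_or_eq_of_le hbale with hbalt | hbaeq
    · obtain ⟨r, har, hrb, hrP⟩ := between N₂ hle hsmul hnonneg hH a b haP hbP
        (by linarith) hbalt
      rcases lt_trichotomy r c with hrc | hrc | hrc
      · have := hasup r hrP (by linarith) hrc.le
        linarith
      · exact hcon (hrc ▸ hrP)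
      · have := hbinf r hrP hrc.le (by linarith)
        linarith
    · -- b - a = π forces a = s₀ and b = s₀ + π; contradict with a shift of t₁
      have ha0 : a = s₀ := by linarith
      have hb0 : b = s₀ + π := by linarith
      obtain ⟨F, hFdef⟩ : ∃ F : ℤ, F = ⌊(t₁ - s₀)/π⌋ := ⟨_, rfl⟩
      have hlb : (F : ℝ) * π ≤ t₁ - s₀ := by
        rw [hFdef]
        have := Int.floor_le ((t₁ - s₀)/π)
        rwa [le_div_iff₀ Real.pi_pos] at this
      have hub : t₁ - s₀ < (F : ℝ) * π + π := by
        rw [hFdef]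
        have := Int.lt_floor_add_one ((t₁ - s₀)/π)
        rw [div_lt_iff₀ Real.pi_pos] at this
        push_cast at this ⊢
        linarith
      have ht'P : N₂ (Real.cos (t₁ + (-F : ℤ) * π), Real.sin (t₁ + (-F : ℤ) * π)) = 1 :=
        hperk (-F) t₁ hPt₁
      have hne2 : t₁ + ((-F : ℤ) : ℝ) * π ≠ s₀ := by
        intro hh
        apply hsin
        have hdiff : t₁ - s₁ = ((F + k₀ : ℤ) : ℝ) * π := by
          push_cast at hh ⊢
          rw [hk₀] at hh
          linarith [hh]
        rw [hdiff]
        exact Real.sin_int_mul_pi _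
      have ht'lb : s₀ < t₁ + ((-F : ℤ) : ℝ) * π := by
        rcases lt_or_eq_of_le (by push_cast; linarith : s₀ ≤ t₁ + ((-F : ℤ) : ℝ) * π) with hh | hh
        · exact hh
        · exact absurd hh.symm hne2
      have ht'ub : t₁ + ((-F : ℤ) : ℝ) * π < s₀ + π := by push_cast; linarith
      rcases le_or_gt (t₁ + ((-F : ℤ) : ℝ) * π) c with hh | hh
      · have := hasup _ ht'P ht'lb.le hh
        rw [ha0] at this
        linarith
      · have := hbinf _ ht'P hh.le ht'ub.le
        rw [hb0] at this
        linarith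
  -- conclude
  intro v
  rcases eq_or_ne v 0 with hv | hv
  · rw [hv, eN_zero, show (0 : ℝ × ℝ) = (0:ℝ) • (0 : ℝ × ℝ) by simp, hsmul]
    simp
  · have hvpos : 0 < eN v := eN_pos hv
    have hvne : eN v ≠ 0 := ne_of_gt hvpos
    have hunit : ((eN v)⁻¹ • v).1^2 + ((eN v)⁻¹ • v).2^2 = 1 := by
      have h1 : ((eN v)⁻¹ • v).1 = (eN v)⁻¹ * v.1 := by simp
      have h2 : ((eN v)⁻¹ • v).2 = (eN v)⁻¹ * v.2 := by simp
      have h3 := eN_sq v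
      rw [h1, h2]
      field_simp
      linarith [h3]
    obtain ⟨c₀, hc₀c, hc₀s⟩ := exists_angle hunit
    have hdir : ((eN v)⁻¹ • v) = (Real.cos c₀, Real.sin c₀) := by
      apply Prod.ext <;> simp [hc₀c, hc₀s]
    have hfin : N₂ ((eN v)⁻¹ • v) = 1 := by rw [hdir]; exact hall c₀
    rw [hsmul, abs_of_pos (inv_pos.2 hvpos)] at hfin
    field_simp at hfin
    linarith [hfin]

theorem key (N : ℝ × ℝ → ℝ)
    (Nadd : ∀ u v, N (u + v) ≤ N u + N v)
    (Nsmul : ∀ (c : ℝ) v, N (c • v) = |c| * N v)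
    (Npos : ∀ v : ℝ × ℝ, v ≠ 0 → 0 < N v)
    (Ncont : Continuous N)
    (hH : ∀ z w : ℝ × ℝ, N z = 1 → N w = 1 → ∃ α β : ℝ, α ≠ 0 ∧ β ≠ 0 ∧
      2 * (α^2 + β^2) ≤ N (α • z + β • w)^2 + N (α • z - β • w)^2) :
    ∀ u v : ℝ × ℝ, N (u + v)^2 + N (u - v)^2 = 2 * (N u^2 + N v^2) := by
  have N0 : N 0 = 0 := by
    have := Nsmul 0 0
    simpa using this
  have Nnonneg : ∀ v, 0 ≤ N v := by
    intro v
    rcases eq_or_ne v 0 with hv | hv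
    · rw [hv, N0]
    · exact (Npos v hv).le
  -- lower bound
  obtain ⟨m₀, hm₀pos, hm₀⟩ : ∃ m₀ : ℝ, 0 < m₀ ∧ ∀ v : ℝ × ℝ, m₀ * eN v ≤ N v := by
    have hsub : {v : ℝ × ℝ | eN v = 1} ⊆ Metric.closedBall 0 1 := by
      intro v hv
      rw [Metric.mem_closedBall, dist_zero_right, Prod.norm_def]
      apply max_le
      · rw [Real.norm_eq_abs]; rw [← hv]; exact abs_fst_le v
      · rw [Real.norm_eq_abs]; rw [← hv]; exact abs_snd_le v
    have hcpt : IsCompact {v : ℝ × ℝ | eN v = 1} :=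
      (isCompact_closedBall (0:ℝ×ℝ) 1).of_isClosed_subset
        (isClosed_eq eN_cont continuous_const) hsub
    have hne : ((1,0) : ℝ×ℝ) ∈ {v : ℝ × ℝ | eN v = 1} := by
      show eN (1,0) = 1
      apply eN_eq_one; norm_num
    obtain ⟨dm, hdm, hmin⟩ := hcpt.exists_isMinOn ⟨(1,0), hne⟩ Ncont.continuousOn
    have hdmne : dm ≠ 0 := by
      intro hh
      have h1 : eN dm = 1 := hdm
      rw [hh, eN_zero] at h1
      norm_num at h1
    refine ⟨N dm, Npos dm hdmne, ?_⟩
    intro v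
    rcases eq_or_ne v 0 with hv | hv
    · simp [hv, eN_zero, N0]
    · have hvpos := eN_pos hv
      have hd : eN ((eN v)⁻¹ • v) = 1 := by
        rw [eN_smul, abs_of_pos (inv_pos.2 hvpos)]
        field_simp
      have hmv := isMinOn_iff.mp hmin _ hd
      rw [Nsmul, abs_of_pos (inv_pos.2 hvpos)] at hmv
      have := mul_le_mul_of_nonneg_right hmv hvpos.le
      rw [mul_comm ((eN v)⁻¹) (N v), mul_assoc, inv_mul_cancel₀ (ne_of_gt hvpos), mul_one] at this
      exact this
  -- upper bound
  obtain ⟨C₀, hC₀pos, hC₀⟩ : ∃ C₀ : ℝ, 0 < C₀ ∧ ∀ v : ℝ × ℝ, N v ≤ C₀ * eN v := by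
    have h10 : ((1,0) : ℝ×ℝ) ≠ 0 := by simp
    have h01 : ((0,1) : ℝ×ℝ) ≠ 0 := by simp
    refine ⟨N (1,0) + N (0,1), add_pos (Npos _ h10) (Npos _ h01), ?_⟩
    intro v
    have hv : v = v.1 • ((1,0) : ℝ×ℝ) + v.2 • ((0,1) : ℝ×ℝ) := by
      apply Prod.ext <;> simp
    calc N v = N (v.1 • ((1,0):ℝ×ℝ) + v.2 • ((0,1):ℝ×ℝ)) := by rw [← hv]
      _ ≤ N (v.1 • ((1,0):ℝ×ℝ)) + N (v.2 • ((0,1):ℝ×ℝ)) := Nadd _ _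
      _ = |v.1| * N (1,0) + |v.2| * N (0,1) := by rw [Nsmul, Nsmul]
      _ ≤ eN v * N (1,0) + eN v * N (0,1) := by
          have e1 := mul_le_mul_of_nonneg_right (abs_fst_le v) (Nnonneg ((1,0):ℝ×ℝ))
          have e2 := mul_le_mul_of_nonneg_right (abs_snd_le v) (Nnonneg ((0,1):ℝ×ℝ))
          linarith
      _ = (N (1,0) + N (0,1)) * eN v := by ring
  -- the optimal inscribed ellipse
  obtain ⟨P₀, hP₀K, hP₀max⟩ : ∃ P₀ : (ℝ×ℝ)×(ℝ×ℝ),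
      (∀ z : ℝ×ℝ, N (z.1 • P₀.1 + z.2 • P₀.2) ≤ eN z) ∧
      (∀ Q : (ℝ×ℝ)×(ℝ×ℝ), (∀ z : ℝ×ℝ, N (z.1 • Q.1 + z.2 • Q.2) ≤ eN z) →
        Q.1.1*Q.2.2 - Q.1.2*Q.2.1 ≤ P₀.1.1*P₀.2.2 - P₀.1.2*P₀.2.1) := by
    have hKeq : {pq : (ℝ×ℝ)×(ℝ×ℝ) | ∀ z : ℝ×ℝ, N (z.1 • pq.1 + z.2 • pq.2) ≤ eN z}
        = ⋂ (z : ℝ×ℝ), {pq : (ℝ×ℝ)×(ℝ×ℝ) | N (z.1 • pq.1 + z.2 • pq.2) ≤ eN z} := by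
      ext pq
      simp [Set.mem_iInter]
    have hKclosed : IsClosed {pq : (ℝ×ℝ)×(ℝ×ℝ) | ∀ z : ℝ×ℝ, N (z.1 • pq.1 + z.2 • pq.2) ≤ eN z} := by
      rw [hKeq]
      refine isClosed_iInter fun z => isClosed_le ?_ continuous_const
      exact Ncont.comp ((continuous_fst.const_smul z.1).add (continuous_snd.const_smul z.2))
    have hKsub : {pq : (ℝ×ℝ)×(ℝ×ℝ) | ∀ z : ℝ×ℝ, N (z.1 • pq.1 + z.2 • pq.2) ≤ eN z}
        ⊆ Metric.closedBall 0 (1/m₀) := by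
      intro pq hpq
      rw [Metric.mem_closedBall, dist_zero_right, Prod.norm_def]
      have hb : ∀ p : ℝ×ℝ, N p ≤ 1 → ‖p‖ ≤ 1/m₀ := by
        intro p hp
        have h1 := hm₀ p
        have h2 : eN p ≤ 1/m₀ := by
          rw [le_div_iff₀ hm₀pos]
          linarith [h1, hp]
        rw [Prod.norm_def]
        apply max_le
        · rw [Real.norm_eq_abs]; exact (abs_fst_le p).trans h2
        · rw [Real.norm_eq_abs]; exact (abs_snd_le p).trans h2
      have e1 : N pq.1 ≤ 1 := by
        have := hpq (1,0)
        simpa [eN_eq_one (by norm_num : ((1:ℝ),(0:ℝ)).1^2 + ((1:ℝ),(0:ℝ)).2^2 = 1)] using this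
      have e2 : N pq.2 ≤ 1 := by
        have := hpq (0,1)
        simpa [eN_eq_one (by norm_num : ((0:ℝ),(1:ℝ)).1^2 + ((0:ℝ),(1:ℝ)).2^2 = 1)] using this
      exact max_le (hb pq.1 e1) (hb pq.2 e2)
    have hKcpt : IsCompact {pq : (ℝ×ℝ)×(ℝ×ℝ) | ∀ z : ℝ×ℝ, N (z.1 • pq.1 + z.2 • pq.2) ≤ eN z} :=
      (isCompact_closedBall 0 (1/m₀)).of_isClosed_subset hKclosed hKsub
    have hKne : ((C₀⁻¹, 0), (0, C₀⁻¹)) ∈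
        {pq : (ℝ×ℝ)×(ℝ×ℝ) | ∀ z : ℝ×ℝ, N (z.1 • pq.1 + z.2 • pq.2) ≤ eN z} := by
      intro z
      have he : z.1 • ((C₀⁻¹, 0) : ℝ×ℝ) + z.2 • ((0, C₀⁻¹) : ℝ×ℝ) = C₀⁻¹ • z := by
        apply Prod.ext <;> simp <;> ring
      rw [he, Nsmul, abs_of_pos (inv_pos.2 hC₀pos)]
      have := hC₀ z
      calc C₀⁻¹ * N z ≤ C₀⁻¹ * (C₀ * eN z) := by
            apply mul_le_mul_of_nonneg_left this (inv_pos.2 hC₀pos).le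
        _ = eN z := by field_simp
    have hgcont : Continuous (fun pq : (ℝ×ℝ)×(ℝ×ℝ) => pq.1.1*pq.2.2 - pq.1.2*pq.2.1) :=
      (continuous_fst.fst.mul continuous_snd.snd).sub (continuous_fst.snd.mul continuous_snd.fst)
    obtain ⟨P₀, hP₀mem, hP₀max⟩ := hKcpt.exists_isMaxOn ⟨_, hKne⟩ hgcont.continuousOn
    exact ⟨P₀, hP₀mem, fun Q hQ => isMaxOn_iff.mp hP₀max Q hQ⟩
  obtain ⟨p₀, q₀⟩ := P₀
  simp only at hP₀K hP₀max
  have hD₀pos : 0 < p₀.1*q₀.2 - p₀.2*q₀.1 := by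
    have := hP₀max ((C₀⁻¹, 0), (0, C₀⁻¹)) (by
      intro z
      have he : z.1 • ((C₀⁻¹, 0) : ℝ×ℝ) + z.2 • ((0, C₀⁻¹) : ℝ×ℝ) = C₀⁻¹ • z := by
        apply Prod.ext <;> simp <;> ring
      rw [he, Nsmul, abs_of_pos (inv_pos.2 hC₀pos)]
      calc C₀⁻¹ * N z ≤ C₀⁻¹ * (C₀ * eN z) := by
            apply mul_le_mul_of_nonneg_left (hC₀ z) (inv_pos.2 hC₀pos).le
        _ = eN z := by field_simp)
    simp only at this
    have hcc : (0:ℝ) < C₀⁻¹ * C₀⁻¹ := by positivity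
    nlinarith [this, hcc]
  -- properties of the pulled-back norm N₂ z = N (z.1 • p₀ + z.2 • q₀)
  have hle₂ : ∀ z : ℝ×ℝ, N (z.1 • p₀ + z.2 • q₀) ≤ eN z := hP₀K
  have hlin : ∀ (α β : ℝ) (z w : ℝ×ℝ),
      (α • z + β • w).1 • p₀ + (α • z + β • w).2 • q₀
        = α • (z.1 • p₀ + z.2 • q₀) + β • (w.1 • p₀ + w.2 • q₀) := by
    intro α β z w
    simp only [Prod.fst_add, Prod.snd_add, Prod.smul_fst, Prod.smul_snd, smul_eq_mul]
    module
  have hlin' : ∀ (α β : ℝ) (z w : ℝ×ℝ),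
      (α • z - β • w).1 • p₀ + (α • z - β • w).2 • q₀
        = α • (z.1 • p₀ + z.2 • q₀) - β • (w.1 • p₀ + w.2 • q₀) := by
    intro α β z w
    simp only [Prod.fst_sub, Prod.snd_sub, Prod.smul_fst, Prod.smul_snd, smul_eq_mul]
    module
  have hsmul₂ : ∀ (c : ℝ) (z : ℝ×ℝ),
      N ((c • z).1 • p₀ + (c • z).2 • q₀) = |c| * N (z.1 • p₀ + z.2 • q₀) := by
    intro c z
    have he : (c • z).1 • p₀ + (c • z).2 • q₀ = c • (z.1 • p₀ + z.2 • q₀) := by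
      simp only [Prod.smul_fst, Prod.smul_snd, smul_eq_mul]
      module
    rw [he, Nsmul]
  have hnonneg₂ : ∀ z : ℝ×ℝ, 0 ≤ N (z.1 • p₀ + z.2 • q₀) := fun z => Nnonneg _
  have hcont₂ : Continuous (fun z : ℝ×ℝ => N (z.1 • p₀ + z.2 • q₀)) :=
    Ncont.comp ((continuous_fst.smul continuous_const).add (continuous_snd.smul continuous_const))
  have hH₂ : ∀ z w : ℝ×ℝ, N (z.1 • p₀ + z.2 • q₀) = 1 → N (w.1 • p₀ + w.2 • q₀) = 1 →
      ∃ α β : ℝ, α ≠ 0 ∧ β ≠ 0 ∧ 2*(α^2+β^2) ≤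
        N ((α•z+β•w).1 • p₀ + (α•z+β•w).2 • q₀)^2
          + N ((α•z-β•w).1 • p₀ + (α•z-β•w).2 • q₀)^2 := by
    intro z w hz hw
    obtain ⟨α, β, hα, hβ, hineq⟩ := hH _ _ hz hw
    exact ⟨α, β, hα, hβ, by rw [hlin, hlin']; exact hineq⟩
  -- the contact set spans
  have hspan : ∃ z w : ℝ×ℝ, (eN z = 1 ∧ N (z.1 • p₀ + z.2 • q₀) = 1)
      ∧ (eN w = 1 ∧ N (w.1 • p₀ + w.2 • q₀) = 1) ∧ z.1*w.2 - z.2*w.1 ≠ 0 := by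
    by_contra hcon
    push_neg at hcon
    obtain ⟨f, hfunit, hcontact⟩ : ∃ f : ℝ×ℝ, f.1^2 + f.2^2 = 1 ∧
        ∀ d : ℝ×ℝ, d.1^2+d.2^2 = 1 → N (d.1 • p₀ + d.2 • q₀) = 1 → d = f ∨ d = -f := by
      by_cases hex : ∃ d : ℝ×ℝ, eN d = 1 ∧ N (d.1 • p₀ + d.2 • q₀) = 1
      · obtain ⟨f, hf1, hf2⟩ := hex
        have hfunit : f.1^2 + f.2^2 = 1 := by
          have := eN_sq f; rw [hf1] at this; linarith [this]
        refine ⟨f, hfunit, ?_⟩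
        intro d hd hdc
        have hdet : d.1*f.2 - d.2*f.1 = 0 := hcon d f ⟨eN_eq_one hd, hdc⟩ ⟨hf1, hf2⟩
        have hd1 : d.1 = (d.1*f.1 + d.2*f.2) * f.1 := by
          linear_combination f.2 * hdet - d.1 * hfunit
        have hd2 : d.2 = (d.1*f.1 + d.2*f.2) * f.2 := by
          linear_combination (-f.1) * hdet - d.2 * hfunit
        have hμ : (d.1*f.1 + d.2*f.2 - 1) * (d.1*f.1 + d.2*f.2 + 1) = 0 := by
          linear_combination hd - (d.1 + (d.1*f.1 + d.2*f.2)*f.1) * hd1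
            - (d.2 + (d.1*f.1 + d.2*f.2)*f.2) * hd2
            - (d.1*f.1 + d.2*f.2)^2 * hfunit
        rcases mul_eq_zero.1 hμ with h | h
        · left
          have hμ1 : d.1*f.1 + d.2*f.2 = 1 := by linarith
          apply Prod.ext
          · rw [hd1, hμ1, one_mul]
          · rw [hd2, hμ1, one_mul]
        · right
          have hμ1 : d.1*f.1 + d.2*f.2 = -1 := by linarith
          apply Prod.ext
          · show d.1 = -f.1
            rw [hd1, hμ1]; ring
          · show d.2 = -f.2
            rw [hd2, hμ1]; ring
      · refine ⟨(1,0), by norm_num, ?_⟩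
        intro d hd hdc
        exact absurd ⟨d, eN_eq_one hd, hdc⟩ hex
    obtain ⟨a, b, hapos, hbpos, hab, hbound⟩ := perturb
      (fun z => N (z.1 • p₀ + z.2 • q₀)) hle₂ hsmul₂ hnonneg₂ hcont₂ f hfunit hcontact
    obtain ⟨w₁, hw₁⟩ : ∃ w₁ : ℝ×ℝ,
        ((a*f.1*f.1 + b*f.2*f.2), (a*f.1*f.2 - b*f.2*f.1)) = w₁ := ⟨_, rfl⟩
    have hw₁1 : w₁.1 = a*f.1*f.1 + b*f.2*f.2 := by rw [← hw₁]
    have hw₁2 : w₁.2 = a*f.1*f.2 - b*f.2*f.1 := by rw [← hw₁]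
    obtain ⟨w₂, hw₂⟩ : ∃ w₂ : ℝ×ℝ,
        ((a*f.2*f.1 - b*f.1*f.2), (a*f.2*f.2 + b*f.1*f.1)) = w₂ := ⟨_, rfl⟩
    have hw₂1 : w₂.1 = a*f.2*f.1 - b*f.1*f.2 := by rw [← hw₂]
    have hw₂2 : w₂.2 = a*f.2*f.2 + b*f.1*f.1 := by rw [← hw₂]
    have hAz : ∀ z : ℝ×ℝ, (a * (z.1*f.1 + z.2*f.2)) • f
        + (b * (z.2*f.1 - z.1*f.2)) • ((-f.2, f.1) : ℝ×ℝ)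
        = ((z.1*w₁.1 + z.2*w₂.1, z.1*w₁.2 + z.2*w₂.2) : ℝ×ℝ) := by
      intro z
      apply Prod.ext
      · simp only [Prod.fst_add, Prod.smul_fst, smul_eq_mul]
        rw [hw₁1, hw₂1]
        ring
      · simp only [Prod.snd_add, Prod.smul_snd, smul_eq_mul]
        rw [hw₁2, hw₂2]
        ring
    have hQmem : ∀ z : ℝ×ℝ,
        N (z.1 • (w₁.1 • p₀ + w₁.2 • q₀) + z.2 • (w₂.1 • p₀ + w₂.2 • q₀)) ≤ eN z := by
      intro z
      have hcomb : z.1 • (w₁.1 • p₀ + w₁.2 • q₀) + z.2 • (w₂.1 • p₀ + w₂.2 • q₀)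
          = (z.1*w₁.1 + z.2*w₂.1) • p₀ + (z.1*w₁.2 + z.2*w₂.2) • q₀ := by module
      rw [hcomb]
      have hb2 := hbound z
      rw [hAz z] at hb2
      exact hb2
    have hdetQ := hP₀max (w₁.1 • p₀ + w₁.2 • q₀, w₂.1 • p₀ + w₂.2 • q₀) hQmem
    simp only [Prod.fst_add, Prod.snd_add, Prod.smul_fst, Prod.smul_snd, smul_eq_mul] at hdetQ
    have hcalc : (w₁.1*p₀.1 + w₁.2*q₀.1) * (w₂.1*p₀.2 + w₂.2*q₀.2)
        - (w₁.1*p₀.2 + w₁.2*q₀.2) * (w₂.1*p₀.1 + w₂.2*q₀.1)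
        = (a*b) * (p₀.1*q₀.2 - p₀.2*q₀.1) := by
      rw [hw₁1, hw₁2, hw₂1, hw₂2]
      linear_combination (a*b*(p₀.1*q₀.2 - p₀.2*q₀.1)*(f.1^2+f.2^2+1)) * hfunit
    rw [hcalc] at hdetQ
    nlinarith [hD₀pos, hab, hdetQ]
  obtain ⟨zs, ws, ⟨hzs1, hzs2⟩, ⟨hws1, hws2⟩, hindep⟩ := hspan
  have hcore : ∀ v : ℝ×ℝ, N (v.1 • p₀ + v.2 • q₀) = eN v :=
    contact_dense (fun z => N (z.1 • p₀ + z.2 • q₀)) hle₂ hsmul₂ hnonneg₂ hcont₂ hH₂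
      zs ws hzs1 hzs2 hws1 hws2 hindep
  have hD₀ne : (p₀.1*q₀.2 - p₀.2*q₀.1) ≠ 0 := ne_of_gt hD₀pos
  have hNv : ∀ v : ℝ×ℝ, N v
      = eN ((q₀.2*v.1 - q₀.1*v.2)/(p₀.1*q₀.2 - p₀.2*q₀.1),
            (p₀.1*v.2 - p₀.2*v.1)/(p₀.1*q₀.2 - p₀.2*q₀.1)) := by
    intro v
    have hback : ((q₀.2*v.1 - q₀.1*v.2)/(p₀.1*q₀.2 - p₀.2*q₀.1)) • p₀
        + ((p₀.1*v.2 - p₀.2*v.1)/(p₀.1*q₀.2 - p₀.2*q₀.1)) • q₀ = v := by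
      apply Prod.ext
      · simp only [Prod.fst_add, Prod.smul_fst, smul_eq_mul]
        rw [div_mul_eq_mul_div, div_mul_eq_mul_div, ← add_div, div_eq_iff hD₀ne]
        ring
      · simp only [Prod.snd_add, Prod.smul_snd, smul_eq_mul]
        rw [div_mul_eq_mul_div, div_mul_eq_mul_div, ← add_div, div_eq_iff hD₀ne]
        ring
    have hc := hcore ((q₀.2*v.1 - q₀.1*v.2)/(p₀.1*q₀.2 - p₀.2*q₀.1),
      (p₀.1*v.2 - p₀.2*v.1)/(p₀.1*q₀.2 - p₀.2*q₀.1))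
    simp only at hc
    rw [hback] at hc
    exact hc
  intro u v
  rw [hNv (u+v), hNv (u-v), hNv u, hNv v, eN_sq, eN_sq, eN_sq, eN_sq]
  simp only [Prod.fst_add, Prod.snd_add, Prod.fst_sub, Prod.snd_sub]
  field_simp
  ring

/-- Let `X` be a real normed linear space with `dim X ≥ 2`. If for all unit vectors
`x, y` there exist nonzero reals `α, β` with `‖αx + βy‖² + ‖αx − βy‖² ≥ 2(α² + β²)`,
then the norm of `X` is induced by an inner product, i.e. it satisfies the
parallelogram law. -/
theorem inner_product_space_of_exists_ge
    {X : Type*} [NormedAddCommGroup X] [NormedSpace ℝ X]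
    (hdim : 2 ≤ Module.rank ℝ X)
    (h : ∀ x y : X, ‖x‖ = 1 → ‖y‖ = 1 → ∃ α β : ℝ, α ≠ 0 ∧ β ≠ 0 ∧
      2 * (α ^ 2 + β ^ 2) ≤ ‖α • x + β • y‖ ^ 2 + ‖α • x - β • y‖ ^ 2) :
    ∀ x y : X, ‖x + y‖ ^ 2 + ‖x - y‖ ^ 2 = 2 * (‖x‖ ^ 2 + ‖y‖ ^ 2) := by
  intro x y
  by_cases hx : ∃ c : ℝ, x = c • y
  · obtain ⟨c, rfl⟩ := hx
    rw [show c • y + y = (c+1) • y by module, show c • y - y = (c-1) • y by module,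
      norm_smul, norm_smul, norm_smul]
    simp only [Real.norm_eq_abs, mul_pow, sq_abs]
    ring
  by_cases hy : ∃ c : ℝ, y = c • x
  · obtain ⟨c, rfl⟩ := hy
    rw [show x + c • x = (1+c) • x by module, show x - c • x = (1-c) • x by module,
      norm_smul, norm_smul, norm_smul]
    simp only [Real.norm_eq_abs, mul_pow, sq_abs]
    ring
  -- x, y are linearly independent
  have hind : ∀ s t : ℝ, s • x + t • y = 0 → s = 0 ∧ t = 0 := by
    intro s t h0
    by_cases hs : s = 0
    · subst hs
      rw [zero_smul, zero_add] at h0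
      rcases smul_eq_zero.1 h0 with ht | hy0
      · exact ⟨rfl, ht⟩
      · exact absurd ⟨0, by rw [hy0, zero_smul]⟩ hy
    · exfalso
      apply hx
      refine ⟨-t/s, ?_⟩
      have : s • x = -(t • y) := by
        rw [eq_neg_iff_add_eq_zero]; exact h0
      have h2 : x = s⁻¹ • (s • x) := by rw [smul_smul, inv_mul_cancel₀ hs, one_smul]
      rw [this] at h2
      rw [h2, smul_neg, smul_smul]
      rw [show -t/s = -(s⁻¹ * t) by ring]
      try rw [neg_smul]
  have Nadd : ∀ u v : ℝ × ℝ, ‖(u+v).1 • x + (u+v).2 • y‖ ≤ ‖u.1 • x + u.2 • y‖ + ‖v.1 • x + v.2 • y‖ := by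
    intro u v
    have he : (u+v).1 • x + (u+v).2 • y = (u.1 • x + u.2 • y) + (v.1 • x + v.2 • y) := by
      simp only [Prod.fst_add, Prod.snd_add]
      module
    rw [he]
    exact norm_add_le _ _
  have Nsmul : ∀ (c : ℝ) (v : ℝ × ℝ), ‖(c • v).1 • x + (c • v).2 • y‖ = |c| * ‖v.1 • x + v.2 • y‖ := by
    intro c v
    have he : (c • v).1 • x + (c • v).2 • y = c • (v.1 • x + v.2 • y) := by
      simp only [Prod.smul_fst, Prod.smul_snd, smul_eq_mul]
      module
    rw [he, norm_smul, Real.norm_eq_abs]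
  have Npos : ∀ v : ℝ × ℝ, v ≠ 0 → 0 < ‖v.1 • x + v.2 • y‖ := by
    intro v hv
    rw [norm_pos_iff]
    intro h0
    obtain ⟨h1, h2⟩ := hind v.1 v.2 h0
    exact hv (Prod.ext h1 h2)
  have Ncont : Continuous (fun v : ℝ × ℝ => ‖v.1 • x + v.2 • y‖) :=
    ((continuous_fst.smul continuous_const).add (continuous_snd.smul continuous_const)).norm
  have hHN : ∀ z w : ℝ × ℝ, ‖z.1 • x + z.2 • y‖ = 1 → ‖w.1 • x + w.2 • y‖ = 1 →
      ∃ α β : ℝ, α ≠ 0 ∧ β ≠ 0 ∧ 2 * (α^2 + β^2) ≤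
        ‖(α • z + β • w).1 • x + (α • z + β • w).2 • y‖^2
          + ‖(α • z - β • w).1 • x + (α • z - β • w).2 • y‖^2 := by
    intro z w hz hw
    obtain ⟨α, β, hα, hβ, hineq⟩ := h (z.1 • x + z.2 • y) (w.1 • x + w.2 • y) hz hw
    refine ⟨α, β, hα, hβ, ?_⟩
    have e1 : (α • z + β • w).1 • x + (α • z + β • w).2 • y
        = α • (z.1 • x + z.2 • y) + β • (w.1 • x + w.2 • y) := by
      simp only [Prod.fst_add, Prod.snd_add, Prod.smul_fst, Prod.smul_snd, smul_eq_mul]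
      module
    have e2 : (α • z - β • w).1 • x + (α • z - β • w).2 • y
        = α • (z.1 • x + z.2 • y) - β • (w.1 • x + w.2 • y) := by
      simp only [Prod.fst_sub, Prod.snd_sub, Prod.smul_fst, Prod.smul_snd, smul_eq_mul]
      module
    rw [e1, e2]
    exact hineq
  have hfin := key (fun v : ℝ × ℝ => ‖v.1 • x + v.2 • y‖) Nadd Nsmul Npos Ncont hHN
    (1,0) (0,1)
  simp only [Prod.mk_add_mk, Prod.mk_sub_mk] at hfin
  norm_num at hfin
  simp only [one_smul, zero_smul, add_zero, zero_add, neg_smul, ← sub_eq_add_neg] at hfin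
  exact hfin
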